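/- In the bifurcating-lane diverge model with explicit costs, there exists at least one Wardrop equilibrium: a feasible flow vector x = (x_1^f, x_1^b, x_2^f, x_2^b) (componentwise nonnegative with x_i^f + x_i^b = q_i for i = 1,2) such that for each i ∈ {1,2}: x_i^f·(J_i^f(x) − J_i^b(x)) ≤ 0 and x_i^b·(J_i^b(x) − J_i^f(x)) ≤ 0. -/

import Mathlib

/-- Best response of one commodity given the other commodity's bridge flow `y`. -/
lemma wardrop_best_response (C Cb nu lam mu q y : ℝ)
    (hC : 0 < C) (hCb : 0 < Cb) (hnu : 0 < nu) (hlam : 0 < lam) (hmu : 0 < mu)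
    (hq : 0 ≤ q) (hy : 0 ≤ y)
    (b : ℝ) (hb : b = max 0 ((C * q - Cb * mu * y) / (C + Cb * lam + nu * y))) :
    0 ≤ b ∧ b ≤ q ∧
    (q - b) * (C * (q - b) - (Cb * (lam * b + mu * y) + nu * b * y)) ≤ 0 ∧
    b * ((Cb * (lam * b + mu * y) + nu * b * y) - C * (q - b)) ≤ 0 := by
  have hD : 0 < C + Cb * lam + nu * y := by positivity
  set N := C * q - Cb * mu * y with hN
  by_cases h : N ≤ 0
  · have hb0 : b = 0 := by
      rw [hb, max_eq_left]
      exact div_nonpos_of_nonpos_of_nonneg h hD.le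
    subst hb0
    refine ⟨le_refl 0, hq, ?_, by simp⟩
    have : C * q - Cb * mu * y ≤ 0 := h
    nlinarith
  · push_neg at h
    have hbN : b = N / (C + Cb * lam + nu * y) := by
      rw [hb, max_eq_right]
      positivity
    have hbpos : 0 ≤ b := by rw [hbN]; positivity
    have hkey : b * (C + Cb * lam + nu * y) = N := by
      rw [hbN]; field_simp
    have hzero : C * (q - b) - (Cb * (lam * b + mu * y) + nu * b * y) = 0 := by
      have : C * (q - b) - (Cb * (lam * b + mu * y) + nu * b * y)
          = N - b * (C + Cb * lam + nu * y) := by rw [hN]; ring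
      rw [this, hkey]; ring
    have hbq : b ≤ q := by
      have hp1 : 0 ≤ Cb * mu * y := by positivity
      have hp2 : 0 ≤ q * (Cb * lam + nu * y) := by positivity
      have h1 : N ≤ C * q := by rw [hN]; linarith
      have h2 : C * q ≤ q * (C + Cb * lam + nu * y) := by nlinarith
      nlinarith
    exact ⟨hbpos, hbq, by rw [hzero]; simp, by nlinarith [hzero]⟩

theorem wardrop_existence_explicit
    (C1f C2f Cb nu lam1 lam2 mu1 mu2 q1 q2 : ℝ)
    (hC1f : 0 < C1f) (hC2f : 0 < C2f) (hCb : 0 < Cb) (hnu : 0 < nu)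
    (hlam1 : 0 < lam1) (hlam1' : lam1 ≤ 1) (hlam2 : 0 < lam2) (hlam2' : lam2 ≤ 1)
    (hmu1 : 0 < mu1) (hmu1' : mu1 ≤ 1) (hmu2 : 0 < mu2) (hmu2' : mu2 ≤ 1)
    (hq1 : 0 ≤ q1) (hq2 : 0 ≤ q2) (hq : q1 + q2 = 1) :
    ∃ x1f x1b x2f x2b : ℝ,
      0 ≤ x1f ∧ 0 ≤ x1b ∧ 0 ≤ x2f ∧ 0 ≤ x2b ∧
      x1f + x1b = q1 ∧ x2f + x2b = q2 ∧
      x1f * (C1f * x1f - (Cb * (lam1 * x1b + mu1 * x2b) + nu * x1b * x2b)) ≤ 0 ∧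
      x1b * ((Cb * (lam1 * x1b + mu1 * x2b) + nu * x1b * x2b) - C1f * x1f) ≤ 0 ∧
      x2f * (C2f * x2f - (Cb * (lam2 * x2b + mu2 * x1b) + nu * x2b * x1b)) ≤ 0 ∧
      x2b * ((Cb * (lam2 * x2b + mu2 * x1b) + nu * x2b * x1b) - C2f * x2f) ≤ 0 := by
  classical
  set f1 : ℝ → ℝ := fun y => max 0 ((C1f * q1 - Cb * mu1 * y) / (C1f + Cb * lam1 + nu * y)) with hf1
  set f2 : ℝ → ℝ := fun y => max 0 ((C2f * q2 - Cb * mu2 * y) / (C2f + Cb * lam2 + nu * y)) with hf2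
  -- continuity of the composed best response on [0, q1]
  have hcont2 : ContinuousOn f2 (Set.Icc 0 q1) := by
    rw [hf2]
    refine ContinuousOn.sup continuousOn_const ?_
    refine ContinuousOn.div (by fun_prop) (by fun_prop) ?_
    intro t ht
    have ht0 : (0:ℝ) ≤ t := ht.1
    have : 0 < C2f + Cb * lam2 + nu * t := by positivity
    exact ne_of_gt this
  have hcont1 : ContinuousOn f1 (Set.Ici 0) := by
    rw [hf1]
    refine ContinuousOn.sup continuousOn_const ?_
    refine ContinuousOn.div (by fun_prop) (by fun_prop) ?_
    intro t ht
    have ht0 : (0:ℝ) ≤ t := ht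
    have : 0 < C1f + Cb * lam1 + nu * t := by positivity
    exact ne_of_gt this
  have hmaps : Set.MapsTo f2 (Set.Icc 0 q1) (Set.Ici 0) := fun t _ => by
    simp only [Set.mem_Ici, hf2]; exact le_max_left _ _
  have hg : ContinuousOn (fun t => f1 (f2 t) - t) (Set.Icc 0 q1) :=
    (hcont1.comp hcont2 hmaps).sub continuousOn_id
  -- values at endpoints
  have hga : 0 ≤ f1 (f2 0) - 0 := by simp only [sub_zero, hf1]; exact le_max_left _ _
  have hgb : f1 (f2 q1) - q1 ≤ 0 := by
    have h2 := wardrop_best_response C2f Cb nu lam2 mu2 q2 q1 hC2f hCb hnu hlam2 hmu2 hq2 hq1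
      (f2 q1) rfl
    have h1 := wardrop_best_response C1f Cb nu lam1 mu1 q1 (f2 q1) hC1f hCb hnu hlam1 hmu1 hq1
      h2.1 (f1 (f2 q1)) rfl
    linarith [h1.2.1]
  have hivt := intermediate_value_Icc' hq1 hg
  have h0mem : (0:ℝ) ∈ Set.Icc (f1 (f2 q1) - q1) (f1 (f2 0) - 0) := ⟨hgb, hga⟩
  obtain ⟨t, ht, hgt⟩ := hivt h0mem
  have hfix : f1 (f2 t) = t := by
    have := hgt; dsimp at this; linarith
  -- apply the best-response lemma to both commodities
  have h2 := wardrop_best_response C2f Cb nu lam2 mu2 q2 t hC2f hCb hnu hlam2 hmu2 hq2 ht.1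
    (f2 t) rfl
  have h1 := wardrop_best_response C1f Cb nu lam1 mu1 q1 (f2 t) hC1f hCb hnu hlam1 hmu1 hq1
    h2.1 t hfix.symm
  refine ⟨q1 - t, t, q2 - f2 t, f2 t, by linarith [h1.2.1], h1.1,
    by linarith [h2.2.1], h2.1, by ring, by ring, ?_, ?_, ?_, ?_⟩
  · have := h1.2.2.1
    have e : C1f * (q1 - t) = C1f * (q1 - t) := rfl
    linarith [h1.2.2.1]
  · linarith [h1.2.2.2]
  · linarith [h2.2.2.1]
  · linarith [h2.2.2.2]
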